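/- Expected number of BH discoveries is bounded by α·m_0 + m_1 (Section 5): on a probability space, let P_1,…,P_m be random variables with values in [0,1], let N ⊆ {1,…,m} be a set of m_0 indices (the true nulls) such that ℙ(P_i < α) ≤ α for every i ∈ N, and set m_1 = m − m_0. Let R be the random BH index at level α computed from P_1,…,P_m, i.e., R(ω) = max{i ∈ {1,…,m} : P_(i)(ω) < i·α/m} (0 if none), where P_(1)(ω) ≤ ⋯ ≤ P_(m)(ω) are the sorted values. Then E[R] ≤ α·m_0 + m_1. -/

import Mathlib

open scoped Classical

/-- `#S(t)`: the number of elements of the multiset `C` that are strictly less than `t`. -/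
noncomputable def countBelow (C : Multiset ℝ) (t : ℝ) : ℕ :=
  (C.filter (fun p => p < t)).card

/-- The `k`-th smallest element (1-indexed order statistic, with multiplicity) of `D`. -/
noncomputable def orderStat (D : Multiset ℝ) (k : ℕ) : ℝ :=
  (D.sort (· ≤ ·)).getD (k - 1) 0

/-- The Benjamini–Hochberg index at level `α`:
`max {i ∈ {1,…,m} : p_(i) < i·α/m}`, with value `0` if this set is empty. -/
noncomputable def rBH (α : ℝ) (C : Multiset ℝ) : ℕ :=
  ((Finset.Icc 1 C.card).filter
    (fun i => orderStat C i < (i : ℝ) * α / (C.card : ℝ))).sup id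

lemma le_countBelow_aux {C : Multiset ℝ} {k : ℕ} {t : ℝ}
    (hk : 1 ≤ k) (hkc : k ≤ Multiset.card C) (h : orderStat C k < t) :
    k ≤ countBelow C t := by
  classical
  set l := C.sort (· ≤ ·) with hl
  have hlen : l.length = Multiset.card C := C.length_sort _
  have hsorted : l.Pairwise (· ≤ ·) := C.pairwise_sort _
  have hcb : countBelow C t = l.countP (fun p => decide (p < t)) := by
    rw [countBelow, ← Multiset.countP_eq_card_filter, ← C.sort_eq (· ≤ ·)]
    rfl
  have hall : ∀ x ∈ l.take k, x < t := by
    intro x hx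
    obtain ⟨i, hi, rfl⟩ := List.mem_take_iff_getElem.1 hx
    have hik : i < k := lt_of_lt_of_le hi (min_le_left _ _)
    have hil : i < l.length := by omega
    have hkl : k - 1 < l.length := by omega
    have hle : l[i] ≤ l[k-1] := by
      have := hsorted.rel_get_of_le (a := ⟨i, hil⟩) (b := ⟨k-1, hkl⟩) (by simp; omega)
      simpa using this
    have hos : orderStat C k = l[k-1] := by
      rw [orderStat, ← hl, List.getD_eq_getElem _ _ hkl]
    exact lt_of_le_of_lt hle (hos ▸ h)
  have hsub : (l.take k).filter (fun p => decide (p < t)) = l.take k :=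
    List.filter_eq_self.2 (fun x hx => by simpa using hall x hx)
  have h1 : k ≤ ((l.take k).filter (fun p => decide (p < t))).length := by
    rw [hsub, List.length_take]; omega
  have h2 : ((l.take k).filter (fun p => decide (p < t))).length ≤
      (l.filter (fun p => decide (p < t))).length :=
    ((l.take_sublist k).filter _).length_le
  rw [hcb, List.countP_eq_length_filter]
  exact le_trans h1 h2

lemma rBH_le_countBelow {α : ℝ} (hα : 0 ≤ α) (C : Multiset ℝ) :
    rBH α C ≤ countBelow C α := by
  classical
  set s := (Finset.Icc 1 (Multiset.card C)).filter
    (fun i => orderStat C i < (i : ℝ) * α / (Multiset.card C : ℝ)) with hs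
  rcases s.eq_empty_or_nonempty with he | hne
  · simp [rBH, ← hs, he]
  · obtain ⟨b, hb, heq⟩ := Finset.exists_mem_eq_sup s hne id
    rw [rBH, ← hs, heq]
    simp only [id]
    rw [hs, Finset.mem_filter, Finset.mem_Icc] at hb
    obtain ⟨⟨hb1, hb2⟩, hbo⟩ := hb
    apply le_countBelow_aux hb1 hb2
    refine lt_of_lt_of_le hbo ?_
    have hc0 : (0:ℝ) < (Multiset.card C : ℝ) := by
      have : 1 ≤ Multiset.card C := le_trans hb1 hb2
      exact_mod_cast this
    rw [div_le_iff₀ hc0]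
    have : (b:ℝ) ≤ (Multiset.card C : ℝ) := by exact_mod_cast hb2
    nlinarith

lemma countBelow_map_le {m : ℕ} (P : Fin m → ℝ) (α : ℝ) (N : Finset (Fin m))
    (m0 m1 : ℕ) (hm0 : m0 = N.card) (hm1 : m1 = m - m0) :
    countBelow (Multiset.map (fun i => P i) Finset.univ.val) α
      ≤ (N.filter (fun i => P i < α)).card + m1 := by
  classical
  have h1 : countBelow (Multiset.map (fun i => P i) Finset.univ.val) α
      = (Finset.univ.filter (fun i => P i < α)).card := by
    rw [countBelow, Multiset.filter_map]
    simp [Finset.card, Function.comp]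
  rw [h1]
  have h2 : (Finset.univ.filter (fun i => P i < α)) ⊆
      (N.filter (fun i => P i < α)) ∪ Nᶜ := by
    intro i hi
    simp only [Finset.mem_filter, Finset.mem_univ, true_and] at hi
    by_cases hiN : i ∈ N
    · exact Finset.mem_union_left _ (Finset.mem_filter.2 ⟨hiN, hi⟩)
    · exact Finset.mem_union_right _ (Finset.mem_compl.2 hiN)
  calc _ ≤ ((N.filter (fun i => P i < α)) ∪ Nᶜ).card := Finset.card_le_card h2
    _ ≤ (N.filter (fun i => P i < α)).card + Nᶜ.card := Finset.card_union_le _ _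
    _ ≤ _ := by
        have : Nᶜ.card = m - N.card := by
          rw [Finset.card_compl]; simp
        omega

open MeasureTheory in
/-- Expected number of BH discoveries is bounded by `α·m₀ + m₁` (Section 5):
on a probability space, let `P 1, …, P m` be random variables with values in `[0,1]`, let
`N` be a set of `m₀` indices (the true nulls) with `ℙ(P i < α) ≤ α` for every `i ∈ N`,
and `m₁ = m − m₀`. If `R ω` is the BH index at level `α` computed from the values
`P 1 ω, …, P m ω`, then `E[R] ≤ α·m₀ + m₁`. -/
theorem expected_BH_discoveries_le
    {Ω : Type*} [MeasurableSpace Ω] (μ : Measure Ω) [IsProbabilityMeasure μ]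
    (α : ℝ) (hα0 : 0 < α) (hα1 : α < 1)
    (m : ℕ) (hm : 1 ≤ m)
    (P : Fin m → Ω → ℝ) (hmeas : ∀ i, Measurable (P i))
    (hrange : ∀ i ω, 0 ≤ P i ω ∧ P i ω ≤ 1)
    (N : Finset (Fin m)) (m0 : ℕ) (hm0 : m0 = N.card)
    (hnull : ∀ i ∈ N, μ {ω | P i ω < α} ≤ ENNReal.ofReal α)
    (m1 : ℕ) (hm1 : m1 = m - m0)
    (R : Ω → ℕ)
    (hRdef : ∀ ω, R ω = rBH α (Multiset.map (fun i => P i ω) Finset.univ.val)) :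
    ∫ ω, (R ω : ℝ) ∂μ ≤ α * (m0 : ℝ) + (m1 : ℝ) := by
  classical
  set g : Ω → ℝ := fun ω =>
    (m1 : ℝ) + ∑ i ∈ N, Set.indicator {ω | P i ω < α} (fun _ => (1:ℝ)) ω with hg
  have hsetmeas : ∀ i : Fin m, MeasurableSet {ω | P i ω < α} := fun i =>
    measurableSet_lt (hmeas i) measurable_const
  have hgint : Integrable g μ := by
    apply (integrable_const ((m1 : ℝ))).add
    apply integrable_finset_sum
    intro i _
    exact (integrable_const (1:ℝ)).indicator (hsetmeas i)
  have hpt : ∀ ω, (R ω : ℝ) ≤ g ω := by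
    intro ω
    have h1 : R ω ≤ (N.filter (fun i => P i ω < α)).card + m1 := by
      rw [hRdef ω]
      exact le_trans (rBH_le_countBelow hα0.le _)
        (countBelow_map_le (fun i => P i ω) α N m0 m1 hm0 hm1)
    have h2 : ∑ i ∈ N, Set.indicator {ω | P i ω < α} (fun _ => (1:ℝ)) ω
        = ((N.filter (fun i => P i ω < α)).card : ℝ) := by
      rw [Finset.sum_indicator_eq_sum_filter]
      simp
    rw [hg]
    simp only
    rw [h2]
    have := h1
    push_cast
    exact_mod_cast by
      have : ((R ω : ℝ)) ≤ (((N.filter (fun i => P i ω < α)).card + m1 : ℕ) : ℝ) := by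
        exact_mod_cast h1
      push_cast at this
      linarith
  have hmono : ∫ ω, (R ω : ℝ) ∂μ ≤ ∫ ω, g ω ∂μ := by
    apply integral_mono_of_nonneg
    · exact Filter.Eventually.of_forall (fun ω => by positivity)
    · exact hgint
    · exact Filter.Eventually.of_forall hpt
  refine le_trans hmono ?_
  have hint : ∫ ω, g ω ∂μ
      = (m1 : ℝ) + ∑ i ∈ N, (μ {ω | P i ω < α}).toReal := by
    rw [hg]
    rw [integral_add (integrable_const _) (integrable_finset_sum _
      (fun i _ => (integrable_const (1:ℝ)).indicator (hsetmeas i)))]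
    congr 1
    · rw [integral_const]; simp
    rw [integral_finset_sum _ (fun i _ => (integrable_const (1:ℝ)).indicator (hsetmeas i))]
    refine Finset.sum_congr rfl (fun i _ => ?_)
    rw [integral_indicator_const (1:ℝ) (hsetmeas i)]
    simp
    rfl
  rw [hint]
  have hsum : ∑ i ∈ N, (μ {ω | P i ω < α}).toReal ≤ α * (m0 : ℝ) := by
    calc ∑ i ∈ N, (μ {ω | P i ω < α}).toReal
        ≤ ∑ _i ∈ N, α := by
          refine Finset.sum_le_sum (fun i hi => ?_)
          have := ENNReal.toReal_mono (by simp) (hnull i hi)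
          rwa [ENNReal.toReal_ofReal hα0.le] at this
      _ = α * (m0 : ℝ) := by rw [Finset.sum_const, hm0]; ring
  linarith
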